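/- Let a > 0, c ≠ 0, σ ≤ μ, σ < −μ, μ ≠ 0, δ ∈ (0, |a/c|), and set û* = [ (D1/μ) ln(1 − (μ/σ) e^{μr}) − 1 ] δ. Then: (A) if r D1 − 1 > −μ/σ, the maximum of I2(û, δ) over û ∈ [−δ, −μδ/σ] is attained at û* when û* < −μδ/σ, and at −μδ/σ otherwise; (B) if r D1 − 1 > −μ/σ and û* < −μδ/σ, then I2(û*, δ) ≥ δ, and hence P(δ,c,2) ≥ δ. -/

import Mathlib

/-- The constant `D₁ = (|μ|+|σ|)(1 + (|μ|+|σ|)|c|δ)`. -/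
noncomputable def D1 (μ σ c δ : ℝ) : ℝ := (|μ| + |σ|) * (1 + (|μ| + |σ|) * |c| * δ)

/-- The constant `D₂ = (D₁² + (|μ|+|σ|)³|c|δ)(1 + |σc|δ)`. -/
noncomputable def D2 (μ σ c δ : ℝ) : ℝ :=
  ((D1 μ σ c δ) ^ 2 + (|μ| + |σ|) ^ 3 * |c| * δ) * (1 + |σ * c| * δ)

/-- The profile `η̄` used to define `η_{(3)}`. -/
noncomputable def etabar (δ d1 d2 s : ℝ) : ℝ :=
  if s ≤ 0 then -δ
  else if s < d1 / d2 then -δ + δ * d2 / 2 * s ^ 2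
  else -δ - δ * d1 ^ 2 / (2 * d2) + δ * d1 * s

/-- The shift `θ_shift` used to define `η_{(3)}`. -/
noncomputable def thetaShift (δ d1 d2 uh : ℝ) : ℝ :=
  if uh ≤ -δ + δ * d1 ^ 2 / (2 * d2) then Real.sqrt (2 * (uh + δ) / (d2 * δ))
  else (uh + δ + δ * d1 ^ 2 / (2 * d2)) / (d1 * δ)

/-- The extremal forcing functions `η_{(k)}` for `k = 1, 2, 3`. -/
noncomputable def etaK (μ σ c δ uh : ℝ) : ℕ → ℝ → ℝ
  | 1, θ => if θ < 0 then -δ else uh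
  | 2, θ => max (uh + D1 μ σ c δ * δ * θ) (-δ)
  | 3, θ => etabar δ (D1 μ σ c δ) (D2 μ σ c δ)
      (θ + thetaShift δ (D1 μ σ c δ) (D2 μ σ c δ) uh)
  | _, _ => 0

/-- `I(û, δ, ĉ, k) = û e^{μ(a+ĉδ)} + σ ∫_{-(a+ĉδ)}^{0} e^{-μθ} η_{(k)}(θ) dθ`
(the constants `D₁, D₂` in `η_{(k)}` are computed from `|c|`, while `ĉ` only enters
the integration limits). -/
noncomputable def Ifun (μ σ c a δ chat uh : ℝ) (k : ℕ) : ℝ :=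
  uh * Real.exp (μ * (a + chat * δ)) +
    σ * ∫ θ in (-(a + chat * δ))..(0 : ℝ), Real.exp (-μ * θ) * etaK μ σ c δ uh k θ

/-- `P(δ, c, k) = sup_{û ∈ [-δ, -μδ/σ]} I(û, δ, |c|, k)`. -/
noncomputable def Pfun (μ σ c a δ : ℝ) (k : ℕ) : ℝ :=
  sSup ((fun uh => Ifun μ σ c a δ |c| uh k) '' Set.Icc (-δ) (-μ * δ / σ))

/-- `r = a + |c|δ`. -/
noncomputable def rr (a c δ : ℝ) : ℝ := a + |c| * δ

/-- The explicit one-piece integral `I₁(û, δ)` (for `μ ≠ 0`). -/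
noncomputable def I1fun (μ σ c a δ uh : ℝ) : ℝ :=
  uh * (Real.exp (μ * rr a c δ) + σ / μ * (Real.exp (μ * rr a c δ) - 1)) +
    σ / μ * D1 μ σ c δ * δ *
      (1 / μ * (Real.exp (μ * rr a c δ) - 1) - rr a c δ * Real.exp (μ * rr a c δ))

/-- The explicit two-piece integral `I₂(û, δ)` (for `μ ≠ 0`). -/
noncomputable def I2fun (μ σ c a δ uh : ℝ) : ℝ :=
  uh * (Real.exp (μ * rr a c δ) - σ / μ) +
    σ / μ * δ * (D1 μ σ c δ / μ *
      (Real.exp (μ * (δ + uh) / (D1 μ σ c δ * δ)) - 1) - Real.exp (μ * rr a c δ))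

/-- The critical point `û* = [(D₁/μ) ln(1 - (μ/σ)e^{μr}) - 1] δ`. -/
noncomputable def ustar (μ σ c a δ : ℝ) : ℝ :=
  (D1 μ σ c δ / μ * Real.log (1 - μ / σ * Real.exp (μ * rr a c δ)) - 1) * δ

/-- Lemma B.2 (A),(B) of Humphries–Magpantay: location of the maximum
of `I₂` over `[-δ, -μδ/σ]` when `r D₁ - 1 > -μ/σ`, and the consequence `P(δ,c,2) ≥ δ`. -/

private lemma mul_nonneg_of_nonpos_nonpos' {a b : ℝ} (ha : a ≤ 0) (hb : b ≤ 0) :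
    0 ≤ a * b := by nlinarith

lemma expg {b v v0 : ℝ} (hv : v ≤ v0) (hv0 : v0 ≤ 0) :
    Real.exp (b*v0) - b*v0 ≤ Real.exp (b*v) - b*v := by
  have key : Real.exp (b*v) = Real.exp (b*v0) * Real.exp (b*(v-v0)) := by
    rw [← Real.exp_add]; ring_nf
  have h1 := Real.add_one_le_exp (b*(v-v0))
  have hp0 : (0:ℝ) < Real.exp (b*v0) := Real.exp_pos _
  rcases le_total b 0 with hb | hb
  · have hw : 0 ≤ b*(v-v0) := mul_nonneg_of_nonpos_nonpos' hb (by linarith : v - v0 ≤ 0)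
    have hA : 1 ≤ Real.exp (b*v0) :=
      Real.one_le_exp (mul_nonneg_of_nonpos_nonpos' hb hv0)
    have hB : 1 ≤ Real.exp (b*(v-v0)) := Real.one_le_exp hw
    nlinarith [mul_le_mul_of_nonneg_right hA (by linarith : (0:ℝ) ≤ Real.exp (b*(v-v0)) - 1)]
  · have hw : b*(v-v0) ≤ 0 := mul_nonpos_of_nonneg_of_nonpos hb (by linarith)
    have hA : Real.exp (b*v0) ≤ 1 := Real.exp_le_one_iff.mpr (mul_nonpos_of_nonneg_of_nonpos hb hv0)
    have hB : Real.exp (b*(v-v0)) ≤ 1 := Real.exp_le_one_iff.mpr hw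
    nlinarith [mul_le_mul_of_nonneg_left hA (by linarith : (0:ℝ) ≤ 1 - Real.exp (b*(v-v0)))]

lemma hasDerivAt_exp_linear (μ A B θ : ℝ) :
    HasDerivAt (fun θ : ℝ => Real.exp (-μ*θ) * (A + B*θ))
      (Real.exp (-μ*θ) * ((B - μ*A) - μ*B*θ)) θ := by
  have h1 : HasDerivAt (fun θ : ℝ => -μ*θ) (-μ) θ := by
    simpa using (hasDerivAt_id θ).const_mul (-μ)
  have h3 : HasDerivAt (fun θ : ℝ => A + B*θ) B θ := by
    simpa using ((hasDerivAt_id θ).const_mul B).const_add A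
  have : HasDerivAt (fun θ : ℝ => Real.exp (-μ*θ) * (A + B*θ)) _ θ := h1.exp.mul h3
  convert this using 1
  ring

lemma integral_exp_linear (μ A B a b : ℝ) :
    ∫ θ in a..b, Real.exp (-μ*θ) * ((B - μ*A) - μ*B*θ)
      = Real.exp (-μ*b) * (A + B*b) - Real.exp (-μ*a) * (A + B*a) := by
  apply intervalIntegral.integral_eq_sub_of_hasDerivAt
  · intro x _; exact hasDerivAt_exp_linear μ A B x
  · apply Continuous.intervalIntegrable; continuity

lemma Ifun_eq (μ σ c a δ uh : ℝ) (hμ : μ ≠ 0) (hδ0 : 0 < δ) (hd1 : 0 < D1 μ σ c δ)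
    (huh1 : -δ ≤ uh) (huh2 : δ + uh ≤ rr a c δ * D1 μ σ c δ * δ) :
    Ifun μ σ c a δ |c| uh 2 = I2fun μ σ c a δ uh := by
  set d1 := D1 μ σ c δ with hd1def
  set r := rr a c δ with hrdef
  set θ0 := -((δ+uh)/(d1*δ)) with hθ0def
  have hd1δ : 0 < d1 * δ := mul_pos hd1 hδ0
  have h0r : -r ≤ θ0 := by
    rw [hθ0def, neg_le_neg_iff, div_le_iff₀ hd1δ]
    nlinarith
  have h00 : θ0 ≤ 0 := by
    rw [hθ0def, neg_nonpos]
    exact div_nonneg (by linarith) hd1δ.le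
  have hfc : Continuous (fun θ : ℝ => Real.exp (-μ*θ) * max (uh + d1*δ*θ) (-δ)) := by
    continuity
  have hθ0v : d1 * δ * θ0 = -(δ + uh) := by
    rw [hθ0def]; field_simp
  have e1 : (∫ θ in (-r)..θ0, Real.exp (-μ*θ) * max (uh + d1*δ*θ) (-δ))
      = Real.exp (-μ*θ0) * (δ/μ) - Real.exp (-μ*(-r)) * (δ/μ) := by
    rw [show (∫ θ in (-r)..θ0, Real.exp (-μ*θ) * max (uh + d1*δ*θ) (-δ))
        = ∫ θ in (-r)..θ0, Real.exp (-μ*θ) * (((0:ℝ) - μ*(δ/μ)) - μ*0*θ) from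
      intervalIntegral.integral_congr ?_]
    · rw [integral_exp_linear]; ring
    · intro θ hθ
      rw [Set.uIcc_of_le h0r] at hθ
      have hmax : uh + d1*δ*θ ≤ -δ := by nlinarith [hθ.2, hθ.1]
      simp only [max_eq_right hmax]
      field_simp
      ring
  have e2 : (∫ θ in θ0..(0:ℝ), Real.exp (-μ*θ) * max (uh + d1*δ*θ) (-δ))
      = Real.exp (-μ*0) * ((-d1*δ/μ - uh)/μ + (-d1*δ/μ)*0)
        - Real.exp (-μ*θ0) * ((-d1*δ/μ - uh)/μ + (-d1*δ/μ)*θ0) := by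
    rw [show (∫ θ in θ0..(0:ℝ), Real.exp (-μ*θ) * max (uh + d1*δ*θ) (-δ))
        = ∫ θ in θ0..(0:ℝ), Real.exp (-μ*θ) *
            (((-d1*δ/μ) - μ*((-d1*δ/μ - uh)/μ)) - μ*(-d1*δ/μ)*θ) from
      intervalIntegral.integral_congr ?_]
    · rw [integral_exp_linear]
    · intro θ hθ
      rw [Set.uIcc_of_le h00] at hθ
      have hmax : -δ ≤ uh + d1*δ*θ := by nlinarith [hθ.1]
      simp only [max_eq_left hmax]
      field_simp
      ring
  have hsplit := intervalIntegral.integral_add_adjacent_intervals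
    (μ := MeasureTheory.volume) (a := -r) (b := θ0) (c := (0:ℝ))
    (f := fun θ => Real.exp (-μ*θ) * max (uh + d1*δ*θ) (-δ))
    (hfc.intervalIntegrable _ _) (hfc.intervalIntegrable _ _)
  have hIc : a + |c| * δ = r := rfl
  have hexp1 : Real.exp (-μ*θ0) = Real.exp (μ*(δ+uh)/(d1*δ)) := by
    congr 1
    rw [hθ0def]; field_simp
  have hexp2 : Real.exp (-μ*(-r)) = Real.exp (μ*r) := by ring_nf
  unfold Ifun I2fun
  simp only [etaK, hIc]
  rw [← hsplit, e1, e2, hexp1, hexp2]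
  have hz : Real.exp (-μ*0) = 1 := by norm_num
  rw [hz]
  have hθ0w : -d1 * δ / μ * θ0 = (δ + uh) / μ := by
    rw [show -d1 * δ / μ * θ0 = -(d1 * δ * θ0)/μ by ring, hθ0v]; ring
  rw [hθ0w]
  have hd1' : d1 ≠ 0 := ne_of_gt hd1
  have hδ' : δ ≠ 0 := ne_of_gt hδ0
  set E := Real.exp (μ * rr a c δ) with hE
  set Y := Real.exp (μ * (δ + uh) / (D1 μ σ c δ * δ)) with hY
  field_simp [hd1', hδ', hμ]
  ring

lemma I2_expand (μ σ c a δ : ℝ) (hμ : μ ≠ 0) (hσ : σ ≠ 0) (hδ : δ ≠ 0)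
    (hd1 : D1 μ σ c δ ≠ 0)
    (hX : 0 < 1 - μ/σ * Real.exp (μ * rr a c δ)) (uh : ℝ) :
    I2fun μ σ c a δ uh = I2fun μ σ c a δ (ustar μ σ c a δ)
      + (σ * D1 μ σ c δ * δ * (1 - μ/σ * Real.exp (μ * rr a c δ)) / μ^2)
        * (Real.exp (μ/(D1 μ σ c δ*δ) * (uh - ustar μ σ c a δ)) - 1
            - μ/(D1 μ σ c δ*δ) * (uh - ustar μ σ c a δ)) := by
  set d1 := D1 μ σ c δ with hd1def
  set E := Real.exp (μ * rr a c δ) with hE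
  set X := 1 - μ/σ * E with hXdef
  set L := Real.log X with hL
  set us := ustar μ σ c a δ with husdef
  have hus : us = (d1/μ * L - 1) * δ := rfl
  have harg : ∀ w : ℝ, μ*(δ+w)/(d1*δ) = L + μ/(d1*δ)*(w - us) := by
    intro w
    rw [hus]; field_simp; ring
  have hexpL : Real.exp L = X := Real.exp_log hX
  rw [I2fun, I2fun]
  rw [show μ * (δ + uh) / (D1 μ σ c δ * δ) = μ*(δ+uh)/(d1*δ) from rfl,
      show μ * (δ + us) / (D1 μ σ c δ * δ) = μ*(δ+us)/(d1*δ) from rfl,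
      harg uh, harg us]
  simp only [sub_self, mul_zero, add_zero, Real.exp_add, hexpL]
  rw [hXdef]
  field_simp
  ring



lemma core_pos (μ σ d1 r : ℝ) (hμ : 0 < μ) (hσ : σ < 0) (hσμ : σ < -μ) (hd1 : 0 < d1)
    (hr : 0 < r) (hd1ge : μ - σ ≤ d1)
    (hq : -μ/σ < r * d1 - 1)
    (hT : d1/μ * Real.log (1 - μ/σ * Real.exp (μ*r)) - 1 < -μ/σ) : False := by
  have hσ0 : σ ≠ 0 := ne_of_lt hσ
  have hμ0 : μ ≠ 0 := ne_of_gt hμ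
  rw [neg_div] at hq hT
  set E := Real.exp (μ*r) with hE
  set X := (1 - μ/σ * E : ℝ) with hX
  set L := Real.log X with hL
  have hEpos : 0 < E := Real.exp_pos _
  have hμσ : μ/σ < 0 := div_neg_of_pos_of_neg hμ hσ
  have hqpos : 0 < -(μ/σ) := by linarith
  have hq1 : -(μ/σ) < 1 := by
    have h5 : -1 < μ/σ := by
      rw [lt_div_iff_of_neg hσ]; linarith
    linarith
  have hE1 : 1 < E := Real.one_lt_exp_iff.mpr (by positivity)
  have hXg1 : 1 < X := by
    rw [hX]; nlinarith [mul_pos hqpos hEpos]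
  have hL0 : 0 < L := Real.log_pos hXg1
  have hd1L : d1 * L < μ * (1 - μ/σ) := by
    have h7 := mul_lt_mul_of_pos_left hT hμ
    have h8 : μ * (d1/μ*L - 1) = d1*L - μ := by
      field_simp
    nlinarith [h7, h8]
  have step1 : L < -(μ/σ) := by
    have hid : μ * (1 - μ/σ) = (μ - σ) * (-(μ/σ)) := by
      field_simp; ring
    have h9 : (μ - σ) * L ≤ d1 * L := mul_le_mul_of_nonneg_right hd1ge hL0.le
    have h10 : (μ - σ) * L < (μ - σ) * (-(μ/σ)) := by linarith [hd1L, hid]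
    exact lt_of_mul_lt_mul_left h10 (by linarith)
  have step2 : L < μ*r := by
    have h11 : 1 - μ/σ < r * d1 := by linarith
    have h12 : μ * (1 - μ/σ) < μ * (r * d1) := mul_lt_mul_of_pos_left h11 hμ
    have h13 : d1 * L < d1 * (μ * r) := by nlinarith [hd1L, h12]
    exact lt_of_mul_lt_mul_left h13 hd1.le
  rcases le_total (μ*r) (-(μ/σ)) with hcase | hcase
  · have ha1 := Real.add_one_le_exp (-(μ*r))
    have ha2 : Real.exp (μ*r) * Real.exp (-(μ*r)) = 1 := by
      rw [← Real.exp_add]; simp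
    have hfact : E * (1 + μ/σ) ≤ E * Real.exp (-(μ*r)) :=
      mul_le_mul_of_nonneg_left (by linarith [ha1, hcase]) hEpos.le
    have hEX : E ≤ X := by
      rw [hX]; nlinarith [hfact, ha2]
    have h14 : μ*r ≤ L := by
      have h15 := Real.log_le_log hEpos hEX
      rwa [hE, Real.log_exp] at h15
    linarith
  · have hb1 := Real.add_one_le_exp (μ/σ)
    have hbpos : 0 < Real.exp (-(μ/σ)) := Real.exp_pos _
    have hb2 : Real.exp (-(μ/σ)) * Real.exp (μ/σ) = 1 := by
      rw [← Real.exp_add, neg_add_cancel, Real.exp_zero]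
    have hb3 : Real.exp (-(μ/σ)) ≤ E := by
      rw [hE]; exact Real.exp_le_exp.mpr hcase
    have hqX : Real.exp (-(μ/σ)) ≤ X := by
      rw [hX]
      nlinarith [mul_le_mul_of_nonneg_left hb1 hbpos.le, hb2, hb3,
        mul_le_mul_of_nonpos_left hb3 hμσ.le]
    have h16 : -(μ/σ) ≤ L := by
      have h17 := Real.log_le_log hbpos hqX
      rwa [Real.log_exp] at h17
    linarith

lemma core_neg (P A E X L : ℝ) (hP0 : 0 < P) (hP1 : P ≤ 1) (hE0 : 0 < E) (hE1 : E < 1)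
    (hX : X = 1 - P*E) (hL : L = Real.log X) (hAP : 1 + P ≤ P*A)
    (hT : A*(-L) < 1 - P) :
    1 ≤ ((-A)*L - 1) * (E - 1/P) + 1/P * ((-A)*(X-1) - E) := by
  have hX0 : 0 < X := by
    nlinarith [mul_le_of_le_one_left hE0.le hP1, hE1]
  have hX1 : X < 1 := by nlinarith [mul_pos hP0 hE0]
  have hL0 : L < 0 := hL ▸ Real.log_neg hX0 hX1
  have key2 : 0 ≤ X*L - X + 1 := by
    have h1 := Real.log_le_sub_one_of_pos (inv_pos.mpr hX0)
    rw [Real.log_inv, ← hL] at h1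
    have h2 : X * X⁻¹ = 1 := mul_inv_cancel₀ (ne_of_gt hX0)
    nlinarith [mul_le_mul_of_nonneg_left h1 hX0.le]
  have key1 : (1+P)*(-L) < P*(1-P) := by
    calc (1+P)*(-L) ≤ (P*A)*(-L) := mul_le_mul_of_nonneg_right hAP (by linarith)
    _ = P*(A*(-L)) := by ring
    _ < P*(1-P) := mul_lt_mul_of_pos_left hT hP0
  have h3 : 0 ≤ (1+P)*(X*L) + P*(1-P) := by
    nlinarith [mul_nonneg (mul_nonneg (show (0:ℝ) ≤ 1+P by linarith)
      (show (0:ℝ) ≤ 1-X by linarith)) (show (0:ℝ) ≤ -L by linarith)]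
  have h4 : (1+P)*(X*L-X+1) ≤ (P*A)*(X*L-X+1) := mul_le_mul_of_nonneg_right hAP key2
  have hPE : P*E = 1 - X := by rw [hX]; ring
  have hPE2 : P*(P*E) = P*(1-X) := by rw [hPE]
  have hmain : 0 ≤ P*A*(X*L-X+1) + P*(1-P) - (1+P)*(1-X) := by nlinarith [h4, h3]
  have h6 : 0 ≤ P*(A*(X*L-X+1) + (1-P) - (1+P)*E) := by
    nlinarith [hmain, hPE, hPE2]
  have hNge : 0 ≤ A*(X*L-X+1) + (1-P) - (1+P)*E := by
    nlinarith [h6, hP0]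
  have hiden : P*(((((-A)*L - 1) * (E - 1/P) + 1/P * ((-A)*(X-1) - E))) - 1)
      = A*(X*L-X+1) + (1-P) - (1+P)*E := by
    rw [hX]
    field_simp
    ring
  nlinarith [hNge, hiden, hP0]

set_option maxHeartbeats 1000000 in
theorem stmt_16 (μ σ c a δ : ℝ) (ha : 0 < a) (hc : c ≠ 0)
    (h1 : σ ≤ μ) (h2 : σ < -μ) (hμ : μ ≠ 0)
    (hδ0 : 0 < δ) (hδ1 : δ < |a / c|) :
    -- (A)
    (-μ / σ < rr a c δ * D1 μ σ c δ - 1 →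
      ((ustar μ σ c a δ < -μ * δ / σ →
        ustar μ σ c a δ ∈ Set.Icc (-δ) (-μ * δ / σ) ∧
        ∀ uh ∈ Set.Icc (-δ) (-μ * δ / σ),
          I2fun μ σ c a δ uh ≤ I2fun μ σ c a δ (ustar μ σ c a δ)) ∧
       (¬ ustar μ σ c a δ < -μ * δ / σ →
        ∀ uh ∈ Set.Icc (-δ) (-μ * δ / σ),
          I2fun μ σ c a δ uh ≤ I2fun μ σ c a δ (-μ * δ / σ)))) ∧
    -- (B)
    (-μ / σ < rr a c δ * D1 μ σ c δ - 1 → ustar μ σ c a δ < -μ * δ / σ →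
      δ ≤ I2fun μ σ c a δ (ustar μ σ c a δ) ∧ δ ≤ Pfun μ σ c a δ 2) := by
  have hσneg : σ < 0 := by linarith
  have hσ : σ ≠ 0 := ne_of_lt hσneg
  have hμabs : 0 < |μ| := abs_pos.mpr hμ
  have hd1pos : 0 < D1 μ σ c δ := by
    rw [D1]
    have h1 : 0 < |μ| + |σ| := by positivity
    have h2 : 0 ≤ (|μ| + |σ|) * |c| * δ := by positivity
    nlinarith
  have hrpos : 0 < rr a c δ := by
    rw [rr]; positivity
  have hEpos : 0 < Real.exp (μ * rr a c δ) := Real.exp_pos _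
  have hX : 0 < 1 - μ/σ * Real.exp (μ * rr a c δ) := by
    rcases lt_or_gt_of_ne hμ with hμneg | hμpos
    · have hE1 : Real.exp (μ * rr a c δ) < 1 := by
        rw [Real.exp_lt_one_iff]
        exact mul_neg_of_neg_of_pos hμneg hrpos
      have hp0 : 0 < μ/σ := div_pos_of_neg_of_neg hμneg hσneg
      have hp1 : μ/σ ≤ 1 := by
        rw [div_le_iff_of_neg hσneg]
        linarith
      nlinarith
    · have h := div_neg_of_pos_of_neg hμpos hσneg
      nlinarith
  have hXd : 0 < 1 - μ/σ * Real.exp (μ * rr a c δ) := hX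
  have husmem : -δ ≤ ustar μ σ c a δ := by
    rw [ustar]
    have hkey : 0 ≤ D1 μ σ c δ / μ * Real.log (1 - μ/σ * Real.exp (μ * rr a c δ)) := by
      rcases lt_or_gt_of_ne hμ with hμneg | hμpos
      · have hE1 : Real.exp (μ * rr a c δ) < 1 := by
          rw [Real.exp_lt_one_iff]
          exact mul_neg_of_neg_of_pos hμneg hrpos
        have hp0 : 0 < μ/σ := div_pos_of_neg_of_neg hμneg hσneg
        have hX1 : 1 - μ/σ * Real.exp (μ * rr a c δ) ≤ 1 := by nlinarith
        have hL : Real.log (1 - μ/σ * Real.exp (μ * rr a c δ)) ≤ 0 :=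
          Real.log_nonpos hX.le hX1
        have hdμ : D1 μ σ c δ / μ ≤ 0 :=
          div_nonpos_of_nonneg_of_nonpos hd1pos.le hμneg.le
        exact mul_nonneg_of_nonpos_nonpos' hdμ hL
      · have hp : μ/σ < 0 := div_neg_of_pos_of_neg hμpos hσneg
        have hX1 : 1 ≤ 1 - μ/σ * Real.exp (μ * rr a c δ) := by nlinarith
        have hL : 0 ≤ Real.log (1 - μ/σ * Real.exp (μ * rr a c δ)) := Real.log_nonneg hX1
        exact mul_nonneg (le_of_lt (div_pos hd1pos hμpos)) hL
    nlinarith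
  have hexpand := I2_expand μ σ c a δ hμ hσ (ne_of_gt hδ0) (ne_of_gt hd1pos) hX
  have hK : σ * D1 μ σ c δ * δ * (1 - μ/σ * Real.exp (μ * rr a c δ)) / μ^2 < 0 := by
    apply div_neg_of_neg_of_pos
    · nlinarith [mul_pos (mul_pos hd1pos hδ0) hX]
    · positivity
  have hmax : ∀ uh, I2fun μ σ c a δ uh ≤ I2fun μ σ c a δ (ustar μ σ c a δ) := by
    intro uh
    rw [hexpand uh]
    have hg := Real.add_one_le_exp (μ/(D1 μ σ c δ*δ) * (uh - ustar μ σ c a δ))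
    nlinarith [hK]
  refine ⟨?_, ?_⟩
  · intro hq
    refine ⟨fun hu => ⟨⟨husmem, le_of_lt hu⟩, fun uh _ => hmax uh⟩, ?_⟩
    intro hnot uh huh
    have hge : -μ * δ / σ ≤ ustar μ σ c a δ := not_lt.mp hnot
    have hGle := expg (b := μ/(D1 μ σ c δ*δ)) (v := uh - ustar μ σ c a δ)
      (v0 := -μ * δ / σ - ustar μ σ c a δ) (by linarith [huh.2]) (by linarith)
    rw [hexpand uh, hexpand (-μ * δ / σ)]
    have hmul := mul_le_mul_of_nonpos_left
      (a := Real.exp (μ/(D1 μ σ c δ*δ) * (uh - ustar μ σ c a δ)) - 1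
            - μ/(D1 μ σ c δ*δ) * (uh - ustar μ σ c a δ))
      (b := Real.exp (μ/(D1 μ σ c δ*δ) * (-μ * δ / σ - ustar μ σ c a δ)) - 1
            - μ/(D1 μ σ c δ*δ) * (-μ * δ / σ - ustar μ σ c a δ))
      (c := σ * D1 μ σ c δ * δ * (1 - μ/σ * Real.exp (μ * rr a c δ)) / μ^2)
      (by linarith [hGle]) hK.le
    linarith [hmul]
  · intro hq hu
    have hT : D1 μ σ c δ/μ * Real.log (1 - μ/σ * Real.exp (μ * rr a c δ)) - 1 < -(μ/σ) := by
      have hu' := hu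
      rw [ustar] at hu'
      have h2 : -μ * δ / σ = (-(μ/σ))*δ := by ring
      rw [h2] at hu'
      exact (mul_lt_mul_iff_of_pos_right hδ0).mp hu'
    have hB1 : δ ≤ I2fun μ σ c a δ (ustar μ σ c a δ) := by
      rcases lt_or_gt_of_ne hμ with hμneg | hμpos
      · -- μ < 0 : the genuine case
        have hE1 : Real.exp (μ * rr a c δ) < 1 :=
          Real.exp_lt_one_iff.mpr (mul_neg_of_neg_of_pos hμneg hrpos)
        have hP0 : 0 < μ/σ := div_pos_of_neg_of_neg hμneg hσneg
        have hP1 : μ/σ ≤ 1 := by rw [div_le_iff_of_neg hσneg]; linarith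
        have hmneg : (0:ℝ) < -μ := by linarith
        have habsμ : |μ| = -μ := abs_of_neg hμneg
        have habsσ : |σ| = -σ := abs_of_neg hσneg
        have hd1ge : -σ - μ ≤ D1 μ σ c δ := by
          rw [D1, habsμ, habsσ]
          nlinarith [mul_nonneg (mul_nonneg (mul_nonneg
            (show (0:ℝ) ≤ -μ + -σ by linarith)
            (show (0:ℝ) ≤ -μ + -σ by linarith)) (abs_nonneg c)) hδ0.le]
        have hdμ : D1 μ σ c δ/μ = -(D1 μ σ c δ/(-μ)) := by
          rw [div_neg, neg_neg]
        have hσμ : σ/μ = 1/(μ/σ) := by rw [one_div, inv_div]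
        have hAP : 1 + μ/σ ≤ (μ/σ)*(D1 μ σ c δ/(-μ)) := by
          rw [show (μ/σ)*(D1 μ σ c δ/(-μ)) = (μ/σ)*D1 μ σ c δ/(-μ) by ring,
            le_div_iff₀ hmneg]
          have h := mul_le_mul_of_nonneg_left hd1ge hP0.le
          have hPσ : μ/σ*σ = μ := div_mul_cancel₀ μ hσ
          nlinarith [h, hPσ]
        have hT' : (D1 μ σ c δ/(-μ))*(-(Real.log (1 - μ/σ * Real.exp (μ * rr a c δ))))
            < 1 - μ/σ := by
          rw [hdμ] at hT
          linarith [hT]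
        have hcore := core_neg (μ/σ) (D1 μ σ c δ/(-μ)) (Real.exp (μ * rr a c δ))
          (1 - μ/σ*Real.exp (μ * rr a c δ))
          (Real.log (1 - μ/σ*Real.exp (μ * rr a c δ)))
          hP0 hP1 hEpos hE1 rfl rfl hAP hT'
        have harg : μ*(δ + ustar μ σ c a δ)/(D1 μ σ c δ*δ)
            = Real.log (1 - μ/σ*Real.exp (μ * rr a c δ)) := by
          rw [ustar]
          field_simp
          ring
        have hIval : I2fun μ σ c a δ (ustar μ σ c a δ)
            = ((D1 μ σ c δ/μ * Real.log (1 - μ/σ*Real.exp (μ * rr a c δ)) - 1)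
                * (Real.exp (μ * rr a c δ) - σ/μ)
               + σ/μ*((D1 μ σ c δ/μ)
                  *((1 - μ/σ*Real.exp (μ * rr a c δ)) - 1) - Real.exp (μ * rr a c δ))) * δ := by
          rw [I2fun, harg, Real.exp_log hX, ustar]
          ring
        have hS : 1 ≤ (D1 μ σ c δ/μ * Real.log (1 - μ/σ*Real.exp (μ * rr a c δ)) - 1)
                * (Real.exp (μ * rr a c δ) - σ/μ)
               + σ/μ*((D1 μ σ c δ/μ)
                  *((1 - μ/σ*Real.exp (μ * rr a c δ)) - 1) - Real.exp (μ * rr a c δ)) := by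
          rw [hdμ, hσμ]
          exact hcore
        rw [hIval]
        calc δ = 1*δ := (one_mul δ).symm
        _ ≤ _ := mul_le_mul_of_nonneg_right hS hδ0.le
      · -- μ > 0 : the hypotheses are contradictory
        exfalso
        have habsμ : |μ| = μ := abs_of_pos hμpos
        have habsσ : |σ| = -σ := abs_of_neg hσneg
        have hd1ge : μ - σ ≤ D1 μ σ c δ := by
          rw [D1, habsμ, habsσ]
          nlinarith [mul_nonneg (mul_nonneg (mul_nonneg
            (show (0:ℝ) ≤ μ + -σ by linarith)
            (show (0:ℝ) ≤ μ + -σ by linarith)) (abs_nonneg c)) hδ0.le]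
        have hTp : D1 μ σ c δ/μ * Real.log (1 - μ/σ * Real.exp (μ * rr a c δ)) - 1
            < -μ/σ := by
          rw [neg_div]
          exact hT
        exact core_pos μ σ (D1 μ σ c δ) (rr a c δ) hμpos hσneg h2 hd1pos hrpos hd1ge hq hTp
    refine ⟨hB1, ?_⟩
    have hIcc_eq : ∀ uh ∈ Set.Icc (-δ) (-μ * δ / σ),
        Ifun μ σ c a δ |c| uh 2 = I2fun μ σ c a δ uh := by
      intro uh huh
      apply Ifun_eq μ σ c a δ uh hμ hδ0 hd1pos huh.1
      have h1 : uh ≤ -μ * δ / σ := huh.2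
      have h2' : -μ * δ / σ = (-(μ/σ))*δ := by ring
      have h3 : 1 + (-(μ/σ)) < rr a c δ * D1 μ σ c δ := by
        have hq' := hq
        rw [neg_div] at hq'
        linarith
      nlinarith [mul_lt_mul_of_pos_right h3 hδ0]
    have husIcc : ustar μ σ c a δ ∈ Set.Icc (-δ) (-μ * δ / σ) := ⟨husmem, le_of_lt hu⟩
    have hbdd : BddAbove ((fun uh => Ifun μ σ c a δ |c| uh 2) '' Set.Icc (-δ) (-μ * δ / σ)) := by
      refine ⟨I2fun μ σ c a δ (ustar μ σ c a δ), ?_⟩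
      rintro x ⟨uh, huh, rfl⟩
      show Ifun μ σ c a δ |c| uh 2 ≤ I2fun μ σ c a δ (ustar μ σ c a δ)
      rw [hIcc_eq uh huh]
      exact hmax uh
    have hmem : Ifun μ σ c a δ |c| (ustar μ σ c a δ) 2 ∈
        ((fun uh => Ifun μ σ c a δ |c| uh 2) '' Set.Icc (-δ) (-μ * δ / σ)) :=
      ⟨ustar μ σ c a δ, husIcc, rfl⟩
    calc δ ≤ I2fun μ σ c a δ (ustar μ σ c a δ) := hB1
    _ = Ifun μ σ c a δ |c| (ustar μ σ c a δ) 2 := (hIcc_eq _ husIcc).symm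
    _ ≤ Pfun μ σ c a δ 2 := by unfold Pfun; exact le_csSup hbdd hmem
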